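/- Let E and F be Riesz spaces with F Dedekind complete, G a Riesz subspace of E, and T : G → F monotone sublinear. If there exists a monotone sublinear map p : E → F with T(x) ≤ p(x) for all x ∈ G, then T extends to a positive sublinear operator R : E → F (i.e., R is subadditive, positively homogeneous, R = T on G, and R(x) ≥ 0 for x ∈ E⁺). -/

import Mathlib

/-- For `l > 0`, scalar multiplication by `l` is an order isomorphism. -/
noncomputable def smulOrderIso {α : Type*} [Preorder α] [AddCommGroup α] [Module ℝ α]
    [PosSMulMono ℝ α] (l : ℝ) (hl : 0 < l) : α ≃o α where
  toFun x := l • x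
  invFun x := l⁻¹ • x
  left_inv x := by simp [smul_smul, inv_mul_cancel₀ hl.ne']
  right_inv x := by simp [smul_smul, mul_inv_cancel₀ hl.ne']
  map_rel_iff' := by
    intro a b
    constructor
    · intro h
      have h2 := smul_le_smul_of_nonneg_left h (le_of_lt (inv_pos.mpr hl))
      simpa [smul_smul, inv_mul_cancel₀ hl.ne'] using h2
    · intro h
      exact smul_le_smul_of_nonneg_left h hl.le

theorem smul_sup_of_pos' {α : Type*} [Lattice α] [AddCommGroup α] [Module ℝ α]
    [PosSMulMono ℝ α] (l : ℝ) (hl : 0 < l) (a b : α) :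
    l • (a ⊔ b) = (l • a) ⊔ (l • b) :=
  (smulOrderIso l hl).map_sup a b

/-- if a monotone sublinear `T` on a Riesz subspace `G` is dominated
on `G` by a monotone sublinear `p : E → F`, then `T` extends to a positive
sublinear operator `R : E → F`. -/
theorem stmt_10 {E F : Type*}
    [Lattice E] [AddCommGroup E] [Module ℝ E]
    [CovariantClass E E (· + ·) (· ≤ ·)] [PosSMulMono ℝ E]
    [ConditionallyCompleteLattice F] [AddCommGroup F] [Module ℝ F]
    [CovariantClass F F (· + ·) (· ≤ ·)] [PosSMulMono ℝ F]
    (G : Submodule ℝ E) (hG : ∀ a b : E, a ∈ G → b ∈ G → a ⊔ b ∈ G)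
    (T : G → F)
    (hTmono : ∀ a b : G, (a : E) ≤ (b : E) → T a ≤ T b)
    (hTsub : ∀ a b : G, T (a + b) ≤ T a + T b)
    (hThom : ∀ (l : ℝ) (a : G), 0 ≤ l → T (l • a) = l • T a)
    (p : E → F)
    (hpmono : ∀ x y : E, x ≤ y → p x ≤ p y)
    (hpsub : ∀ x y : E, p (x + y) ≤ p x + p y)
    (hphom : ∀ (l : ℝ) (x : E), 0 ≤ l → p (l • x) = l • p x)
    (hdom : ∀ a : G, T a ≤ p (a : E)) :
    ∃ R : E → F,
      (∀ x y : E, R (x + y) ≤ R x + R y) ∧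
      (∀ (l : ℝ) (x : E), 0 ≤ l → R (l • x) = l • R x) ∧
      (∀ a : G, R (a : E) = T a) ∧
      (∀ x : E, 0 ≤ x → 0 ≤ R x) := by
  classical
  haveI : CovariantClass F F (Function.swap (· + ·)) (· ≤ ·) :=
    ⟨fun a b c h => by simpa [add_comm _ a] using add_le_add_left h a⟩
  haveI : CovariantClass E E (Function.swap (· + ·)) (· ≤ ·) :=
    ⟨fun a b c h => by simpa [add_comm _ a] using add_le_add_left h a⟩
  -- positive part, as an element of G
  have hp0 : p 0 = 0 := by
    have := hphom 0 0 le_rfl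
    simpa using this
  have hT0 : T 0 = 0 := by
    have := hThom 0 0 le_rfl
    simpa using this
  have hneg : ∀ u v : F, u ≤ v → -v ≤ -u := by
    intro u v h
    have h1 : -v + u ≤ -v + v := add_le_add_right h _
    have h2 := add_le_add_right h1 (-u)
    simpa [add_assoc] using h2
  set posG : G → G := fun a => ⟨(a : E) ⊔ 0, hG _ _ a.2 G.zero_mem⟩ with hposG
  -- the candidate extension
  set f : E → G → F := fun x a => T a + p ((x - (a : E)) ⊔ 0) with hf
  set R : E → F := fun x => sInf (Set.range (f x)) with hR
  have hne : ∀ x : E, (Set.range (f x)).Nonempty := fun x => ⟨f x 0, ⟨0, rfl⟩⟩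
  -- lower bound for T
  have hTlow : ∀ a : G, -(p ((-(a : E)) ⊔ 0)) ≤ T a := by
    intro a
    have h0 : (0 : E) ≤ ((a + posG (-a) : G) : E) := by
      have h1 : (-(a : E)) ≤ (-(a : E)) ⊔ 0 := le_sup_left
      have h2 : (a : E) + (-(a : E)) ≤ (a : E) + ((-(a : E)) ⊔ 0) := add_le_add_right h1 _
      simpa [hposG] using h2
    have h3 : (0 : F) ≤ T (a + posG (-a)) := by
      have := hTmono 0 (a + posG (-a)) (by simpa using h0)
      simpa [hT0] using this
    have h4 : T (a + posG (-a)) ≤ T a + T (posG (-a)) := hTsub _ _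
    have h5 : T (posG (-a)) ≤ p ((-(a : E)) ⊔ 0) := hdom (posG (-a))
    have h6 : (0 : F) ≤ T a + p ((-(a : E)) ⊔ 0) :=
      h3.trans (h4.trans (add_le_add_right h5 _))
    have h7 := add_le_add_right h6 (-(p ((-(a : E)) ⊔ 0)))
    simpa [add_assoc] using h7
  -- uniform lower bound for the defining set
  have hlow : ∀ (x : E) (a : G), -(p ((-x) ⊔ 0)) ≤ f x a := by
    intro x a
    have hsup : (-(a : E)) ⊔ 0 ≤ ((x - (a : E)) ⊔ 0) + ((-x) ⊔ 0) := by
      refine sup_le ?_ ?_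
      · have : (-(a : E)) = (x - (a : E)) + (-x) := by abel
        rw [this]
        exact add_le_add le_sup_left le_sup_left
      · exact add_nonneg (le_sup_right) (le_sup_right)
    have h1 : p ((-(a : E)) ⊔ 0) ≤ p ((x - (a : E)) ⊔ 0) + p ((-x) ⊔ 0) :=
      (hpmono _ _ hsup).trans (hpsub _ _)
    have h2 : -(p ((x - (a : E)) ⊔ 0) + p ((-x) ⊔ 0)) ≤ T a := by
      refine le_trans ?_ (hTlow a)
      exact hneg _ _ h1
    have h3 := add_le_add_left h2 (p ((x - (a : E)) ⊔ 0))
    calc -(p ((-x) ⊔ 0))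
        = -(p ((x - (a : E)) ⊔ 0) + p ((-x) ⊔ 0)) + p ((x - (a : E)) ⊔ 0) := by abel
      _ ≤ T a + p ((x - (a : E)) ⊔ 0) := h3
  have hbdd : ∀ x : E, BddBelow (Set.range (f x)) := by
    intro x
    exact ⟨-(p ((-x) ⊔ 0)), fun z hz => by obtain ⟨a, rfl⟩ := hz; exact hlow x a⟩
  refine ⟨R, ?_, ?_, ?_, ?_⟩
  · -- subadditivity
    intro x y
    have key : ∀ (a b : G), R (x + y) ≤ f x a + f y b := by
      intro a b
      have h1 : R (x + y) ≤ f (x + y) (a + b) := csInf_le (hbdd _) ⟨a + b, rfl⟩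
      refine h1.trans ?_
      have hsup : ((x + y) - ((a : E) + (b : E))) ⊔ 0
          ≤ ((x - (a : E)) ⊔ 0) + ((y - (b : E)) ⊔ 0) := by
        refine sup_le ?_ (add_nonneg le_sup_right le_sup_right)
        have : (x + y) - ((a : E) + (b : E)) = (x - (a : E)) + (y - (b : E)) := by abel
        rw [this]
        exact add_le_add le_sup_left le_sup_left
      have hpp : p (((x + y) - ((a : E) + (b : E))) ⊔ 0)
          ≤ p ((x - (a : E)) ⊔ 0) + p ((y - (b : E)) ⊔ 0) :=
        (hpmono _ _ hsup).trans (hpsub _ _)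
      have hTT : T (a + b) ≤ T a + T b := hTsub a b
      calc f (x + y) (a + b)
          = T (a + b) + p (((x + y) - ((a : E) + (b : E))) ⊔ 0) := by
            simp [hf]
        _ ≤ (T a + T b) + (p ((x - (a : E)) ⊔ 0) + p ((y - (b : E)) ⊔ 0)) :=
            add_le_add hTT hpp
        _ = f x a + f y b := by simp [hf]; abel
    -- pass to the infima
    have h1 : ∀ a : G, R (x + y) - R y ≤ f x a := by
      intro a
      have h2 : ∀ b : G, R (x + y) - f x a ≤ f y b := by
        intro b
        have := key a b
        exact sub_le_iff_le_add'.mpr this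
      have h3 : R (x + y) - f x a ≤ R y :=
        le_csInf (hne y) (fun z hz => by obtain ⟨b, rfl⟩ := hz; exact h2 b)
      exact sub_le_comm.mp h3
    have h4 : R (x + y) - R y ≤ R x :=
      le_csInf (hne x) (fun z hz => by obtain ⟨a, rfl⟩ := hz; exact h1 a)
    exact sub_le_iff_le_add.mp h4
  · -- positive homogeneity
    intro l x hl
    rcases eq_or_lt_of_le hl with hl0 | hl0
    · subst hl0
      have hx0 : R ((0:ℝ) • x) = R 0 := by rw [zero_smul]
      have : R 0 = T 0 := by
        have hle : R 0 ≤ T 0 := by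
          have : f 0 0 = T 0 := by simp [hf, hp0]
          exact this ▸ csInf_le (hbdd _) ⟨0, rfl⟩
        have hge : T 0 ≤ R 0 := by
          refine le_csInf (hne 0) ?_
          rintro z ⟨a, rfl⟩
          have hsub0 : (0 : E) ≤ (a : E) + (((0:E) - (a : E)) ⊔ 0) := by
            have h1 : -(a : E) ≤ ((0:E) - (a : E)) ⊔ 0 := by
              simp
            have := add_le_add_right h1 (a : E)
            simpa using this
          have hTa : T 0 ≤ T a + p (((0:E) - (a : E)) ⊔ 0) := by
            have hmem : ((0:E) - (a : E)) ⊔ 0 ∈ G :=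
              hG _ _ (G.sub_mem G.zero_mem a.2) G.zero_mem
            have h1 : T 0 ≤ T (a + ⟨_, hmem⟩) := hTmono _ _ (by simpa using hsub0)
            have h2 : T (a + ⟨_, hmem⟩) ≤ T a + T ⟨_, hmem⟩ := hTsub _ _
            have h3 : T (⟨((0:E) - (a : E)) ⊔ 0, hmem⟩ : G) ≤ p (((0:E) - (a : E)) ⊔ 0) :=
              hdom _
            exact h1.trans (h2.trans (add_le_add_right h3 _))
          exact hTa
        exact le_antisymm hle hge
      rw [hx0, this, hT0, zero_smul]
    · -- l > 0
      have hkey : ∀ b : G, f (l • x) (l • b) = l • f x b := by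
        intro b
        have hc : ((l • b : G) : E) = l • (b : E) := rfl
        have hsup : (l • x - l • (b : E)) ⊔ 0 = l • ((x - (b : E)) ⊔ 0) := by
          rw [smul_sup_of_pos' l hl0, smul_sub, smul_zero]
        simp [hf, hc, hsup, hThom l b hl, hphom l _ hl, smul_add, smul_sub]
      have hset : Set.range (f (l • x)) = (fun z => l • z) '' Set.range (f x) := by
        ext z
        constructor
        · rintro ⟨a, rfl⟩
          have h3 := hkey (l⁻¹ • a)
          rw [smul_smul, mul_inv_cancel₀ hl0.ne', one_smul] at h3
          exact ⟨f x (l⁻¹ • a), ⟨_, rfl⟩, h3.symm⟩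
        · rintro ⟨w, ⟨b, rfl⟩, rfl⟩
          exact ⟨l • b, hkey b⟩
      have := (smulOrderIso (α := F) l hl0).map_csInf' (hne x) (hbdd x)
      simp only [hR]
      rw [hset]
      simpa [smulOrderIso, Set.image] using this.symm
  · -- extension
    intro a
    have hle : R (a : E) ≤ T a := by
      have : f (a : E) a = T a := by simp [hf, hp0]
      exact this ▸ csInf_le (hbdd _) ⟨a, rfl⟩
    have hge : T a ≤ R (a : E) := by
      refine le_csInf (hne _) ?_
      rintro z ⟨b, rfl⟩
      have hmem : ((a : E) - (b : E)) ⊔ 0 ∈ G :=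
        hG _ _ (G.sub_mem a.2 b.2) G.zero_mem
      have hsub0 : (a : E) ≤ (b : E) + (((a : E) - (b : E)) ⊔ 0) := by
        have h1 : (a : E) - (b : E) ≤ ((a : E) - (b : E)) ⊔ 0 := le_sup_left
        have := add_le_add_right h1 (b : E)
        simpa using this
      have h1 : T a ≤ T (b + ⟨_, hmem⟩) := hTmono _ _ (by simpa using hsub0)
      have h2 : T (b + ⟨_, hmem⟩) ≤ T b + T ⟨_, hmem⟩ := hTsub _ _
      have h3 : T (⟨((a : E) - (b : E)) ⊔ 0, hmem⟩ : G) ≤ p (((a : E) - (b : E)) ⊔ 0) :=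
        hdom _
      exact h1.trans (h2.trans (add_le_add_right h3 _))
    exact le_antisymm hle hge
  · -- positivity
    intro x hx
    refine le_csInf (hne x) ?_
    rintro z ⟨a, rfl⟩
    have hsup : (-(a : E)) ⊔ 0 ≤ (x - (a : E)) ⊔ 0 := by
      refine sup_le ?_ le_sup_right
      refine le_trans ?_ le_sup_left
      have := add_le_add_right hx (-(a : E))
      simpa [sub_eq_add_neg] using this
    have h1 : -(p ((x - (a : E)) ⊔ 0)) ≤ -(p ((-(a : E)) ⊔ 0)) :=
      hneg _ _ (hpmono _ _ hsup)
    have h2 : -(p ((x - (a : E)) ⊔ 0)) ≤ T a := h1.trans (hTlow a)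
    have h3 := add_le_add_left h2 (p ((x - (a : E)) ⊔ 0))
    simpa [hf] using h3.trans_eq' (by abel)
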